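/- arXiv:2502.13068 — 7 statements merged into one kernel-verified Lean document; each statement's English description precedes it below -/
import Mathlib

section
/- Let (a_n) be a sequence in a commutative ring and (b_n) its binomial transform b_n = Σ_{k=0}^n (-1)^{n-k} C(n,k) a_k. Then for every positive integer n, the n×n Hankel matrices H_n(a) = (a_{i+j})_{0≤i,j≤n-1} and H_n(b) = (b_{i+j})_{0≤i,j≤n-1} have equal determinants. -/
open Finset Matrix

lemma hankel_key {R : Type*} [CommRing R] (a : ℕ → R) (i j : ℕ) :
    ∑ m ∈ range (i + j + 1), (-1 : R) ^ (i + j - m) * ((i + j).choose m : R) * a m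
      = ∑ k ∈ range (i + 1), ∑ l ∈ range (j + 1),
        ((-1 : R) ^ (i - k) * (i.choose k : R)) * a (k + l) *
          ((-1 : R) ^ (j - l) * (j.choose l : R)) := by
  have step1 : ∀ m, (-1 : R) ^ (i + j - m) * ((i + j).choose m : R) * a m
      = ∑ k ∈ range (m + 1),
          (-1 : R) ^ (i + j - (k + (m - k))) * ((i.choose k : R) * (j.choose (m - k) : R))
            * a (k + (m - k)) := by
    intro m
    rw [Nat.add_choose_eq, Finset.Nat.sum_antidiagonal_eq_sum_range_succ_mk]
    push_cast
    rw [Finset.mul_sum, Finset.sum_mul]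
    refine Finset.sum_congr rfl fun k hk => ?_
    have hk' : k ≤ m := Nat.lt_succ_iff.mp (Finset.mem_range.mp hk)
    rw [Nat.add_sub_cancel' hk']
  calc ∑ m ∈ range (i + j + 1), (-1 : R) ^ (i + j - m) * ((i + j).choose m : R) * a m
      = ∑ m ∈ range (i + j + 1), ∑ k ∈ range (m + 1),
          (-1 : R) ^ (i + j - (k + (m - k))) * ((i.choose k : R) * (j.choose (m - k) : R))
            * a (k + (m - k)) := Finset.sum_congr rfl fun m _ => step1 m
    _ = ∑ k ∈ range (i + j + 1), ∑ l ∈ range (i + j + 1 - k),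
          (-1 : R) ^ (i + j - (k + l)) * ((i.choose k : R) * (j.choose l : R)) * a (k + l) :=
        Finset.sum_range_diag_flip (i + j + 1)
          (fun k l => (-1 : R) ^ (i + j - (k + l)) * ((i.choose k : R) * (j.choose l : R))
            * a (k + l))
    _ = ∑ k ∈ range (i + 1), ∑ l ∈ range (i + j + 1 - k),
          (-1 : R) ^ (i + j - (k + l)) * ((i.choose k : R) * (j.choose l : R)) * a (k + l) := by
        refine (Finset.sum_subset (Finset.range_subset_range.mpr (by omega)) fun k _ hk => ?_).symm
        have hik : i < k := by
          by_contra h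
          exact hk (Finset.mem_range.mpr (by omega))
        have hz : (i.choose k : R) = 0 := by
          rw [Nat.choose_eq_zero_of_lt hik]; simp
        simp [hz]
    _ = ∑ k ∈ range (i + 1), ∑ l ∈ range (j + 1),
          (-1 : R) ^ (i + j - (k + l)) * ((i.choose k : R) * (j.choose l : R)) * a (k + l) := by
        refine Finset.sum_congr rfl fun k hk => ?_
        have hki : k ≤ i := Nat.lt_succ_iff.mp (Finset.mem_range.mp hk)
        refine (Finset.sum_subset (Finset.range_subset_range.mpr (by omega)) fun l _ hl => ?_).symm
        have hjl : j < l := by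
          by_contra h
          exact hl (Finset.mem_range.mpr (by omega))
        have hz : (j.choose l : R) = 0 := by
          rw [Nat.choose_eq_zero_of_lt hjl]; simp
        simp [hz]
    _ = _ := by
        refine Finset.sum_congr rfl fun k hk => Finset.sum_congr rfl fun l hl => ?_
        have hki : k ≤ i := Nat.lt_succ_iff.mp (Finset.mem_range.mp hk)
        have hlj : l ≤ j := Nat.lt_succ_iff.mp (Finset.mem_range.mp hl)
        have hsplit : i + j - (k + l) = (i - k) + (j - l) := by omega
        rw [hsplit, pow_add]
        ring

theorem hankel_det_binomial_transform {R : Type*} [CommRing R] (a b : ℕ → R)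
    (hb : ∀ n, b n = ∑ k ∈ Finset.range (n + 1),
      (-1 : R) ^ (n - k) * (n.choose k : R) * a k)
    (n : ℕ) (hn : 0 < n) :
    Matrix.det (fun i j : Fin n => a (i + j)) =
      Matrix.det (fun i j : Fin n => b (i + j)) := by
  set A : Matrix (Fin n) (Fin n) R := Matrix.of fun i j : Fin n => a (i + j) with hA
  set L : Matrix (Fin n) (Fin n) R :=
    Matrix.of fun i k : Fin n => (-1 : R) ^ (i.1 - k.1) * ((i.1).choose k.1 : R) with hL
  have hLtri : ∀ i k : Fin n, i < k → L i k = 0 := by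
    intro i k hik
    have : (i.1).choose k.1 = 0 := Nat.choose_eq_zero_of_lt hik
    simp [hL, this]
  have hdetL : L.det = 1 := by
    rw [Matrix.det_of_lowerTriangular L (fun i k hik => hLtri i k (by simpa using hik))]
    simp [hL]
  have hmul : (Matrix.of fun i j : Fin n => b (i + j)) = L * A * Lᵀ := by
    funext i j
    have entry : (L * A * Lᵀ) i j = ∑ k : Fin n, ∑ l : Fin n,
        ((-1 : R) ^ (i.1 - k.1) * ((i.1).choose k.1 : R)) * a (k.1 + l.1) *
          ((-1 : R) ^ (j.1 - l.1) * ((j.1).choose l.1 : R)) := by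
      rw [Matrix.mul_apply]
      rw [Finset.sum_comm]
      refine Finset.sum_congr rfl fun k _ => ?_
      rw [Matrix.mul_apply, Finset.sum_mul]
      rfl
    have F : ℕ → ℕ → R := fun k l =>
      ((-1 : R) ^ (i.1 - k) * ((i.1).choose k : R)) * a (k + l) *
        ((-1 : R) ^ (j.1 - l) * ((j.1).choose l : R))
    have toRange : (∑ k : Fin n, ∑ l : Fin n,
        ((-1 : R) ^ (i.1 - k.1) * ((i.1).choose k.1 : R)) * a (k.1 + l.1) *
          ((-1 : R) ^ (j.1 - l.1) * ((j.1).choose l.1 : R)))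
        = ∑ k ∈ range n, ∑ l ∈ range n,
          ((-1 : R) ^ (i.1 - k) * ((i.1).choose k : R)) * a (k + l) *
            ((-1 : R) ^ (j.1 - l) * ((j.1).choose l : R)) := by
      rw [← Fin.sum_univ_eq_sum_range (fun k => ∑ l ∈ range n,
        ((-1 : R) ^ (i.1 - k) * ((i.1).choose k : R)) * a (k + l) *
          ((-1 : R) ^ (j.1 - l) * ((j.1).choose l : R))) n]
      exact Finset.sum_congr rfl fun k _ => (Fin.sum_univ_eq_sum_range
        (fun l => ((-1 : R) ^ (i.1 - k.1) * ((i.1).choose k.1 : R)) * a (k.1 + l) *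
          ((-1 : R) ^ (j.1 - l) * ((j.1).choose l : R))) n)
    have restrict : (∑ k ∈ range n, ∑ l ∈ range n,
          ((-1 : R) ^ (i.1 - k) * ((i.1).choose k : R)) * a (k + l) *
            ((-1 : R) ^ (j.1 - l) * ((j.1).choose l : R)))
        = ∑ k ∈ range (i.1 + 1), ∑ l ∈ range (j.1 + 1),
          ((-1 : R) ^ (i.1 - k) * ((i.1).choose k : R)) * a (k + l) *
            ((-1 : R) ^ (j.1 - l) * ((j.1).choose l : R)) := by
      rw [← Finset.sum_subset (Finset.range_subset_range.mpr (Nat.succ_le_of_lt i.isLt))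
        (fun k _ hk => ?_)]
      · refine Finset.sum_congr rfl fun k _ => ?_
        rw [← Finset.sum_subset (Finset.range_subset_range.mpr (Nat.succ_le_of_lt j.isLt))
          (fun l _ hl => ?_)]
        have hjl : j.1 < l := by
          by_contra h
          exact hl (Finset.mem_range.mpr (by omega))
        have hz : ((j.1).choose l : R) = 0 := by
          rw [Nat.choose_eq_zero_of_lt hjl]; simp
        simp [hz]
      · have hik : i.1 < k := by
          by_contra h
          exact hk (Finset.mem_range.mpr (by omega))
        have hz : ((i.1).choose k : R) = 0 := by
          rw [Nat.choose_eq_zero_of_lt hik]; simp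
        simp [hz]
    show b (i.1 + j.1) = (L * A * Lᵀ) i j
    rw [entry, toRange, restrict, hb, hankel_key]
  have : Matrix.det (fun i j : Fin n => b (i + j)) = Matrix.det (L * A * Lᵀ) :=
    congrArg Matrix.det hmul
  rw [this, Matrix.det_mul, Matrix.det_mul, hdetL, Matrix.det_transpose, hdetL]
  show A.det = 1 * A.det * 1
  ring
end

section
/- Let L_n be the n×n lower-triangular matrix with (i,j) entry (-1)^{i-j} C(i,j) for j ≤ i (indices from 0) and 0 otherwise, and let H_n(a) be the Hankel matrix of a sequence (a_n). Then L_n H_n(a) L_n^T is the Hankel matrix of the binomial transform (b_n) of (a_n), where b_n = Σ_{k=0}^n (-1)^{n-k} C(n,k) a_k. -/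
open Finset

lemma aux_binomial {R : Type*} [CommRing R] (a : ℕ → R) (i j : ℕ) :
    ∑ k ∈ range (i+1), ∑ l ∈ range (j+1),
      ((-1:R)^(i-k) * (i.choose k : R)) * a (k+l) * ((-1:R)^(j-l) * (j.choose l : R)) =
    ∑ m ∈ range (i+j+1), (-1:R)^(i+j-m) * ((i+j).choose m : R) * a m := by
  set F : ℕ × ℕ → R := fun p =>
    (-1:R)^(i+j-(p.1+p.2)) * (i.choose p.1 : R) * (j.choose p.2 : R) * a (p.1+p.2) with hF
  have hS : ∑ k ∈ range (i+1), ∑ l ∈ range (j+1),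
      ((-1:R)^(i-k) * (i.choose k : R)) * a (k+l) * ((-1:R)^(j-l) * (j.choose l : R)) =
      ∑ p ∈ (range (i+j+1) ×ˢ range (i+j+1)).filter (fun p => p.1 + p.2 ≤ i + j), F p := by
    rw [← Finset.sum_product']
    have hstep : ∑ p ∈ range (i+1) ×ˢ range (j+1),
        ((-1:R)^(i-p.1) * (i.choose p.1 : R)) * a (p.1+p.2) *
          ((-1:R)^(j-p.2) * (j.choose p.2 : R)) =
        ∑ p ∈ range (i+1) ×ˢ range (j+1), F p := by
      apply Finset.sum_congr rfl
      rintro ⟨k, l⟩ hm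
      simp only [Finset.mem_product, Finset.mem_range] at hm
      have h2 : i + j - (k + l) = (i - k) + (j - l) := by omega
      simp only [hF, h2, pow_add]
      ring
    rw [hstep]
    apply Finset.sum_subset
    · rintro ⟨k, l⟩ hm
      simp only [Finset.mem_product, Finset.mem_range, Finset.mem_filter] at hm ⊢
      omega
    · rintro ⟨k, l⟩ hm hnm
      simp only [Finset.mem_filter, Finset.mem_product, Finset.mem_range] at hm hnm
      rcases Nat.lt_or_ge i k with h | h
      · simp [hF, Nat.choose_eq_zero_of_lt h]
      · have : j < l := by omega
        simp [hF, Nat.choose_eq_zero_of_lt this]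
  rw [hS]
  have hset : (range (i+j+1) ×ˢ range (i+j+1)).filter (fun p => p.1 + p.2 ≤ i + j)
      = (range (i+j+1)).biUnion Finset.HasAntidiagonal.antidiagonal := by
    ext ⟨k, l⟩
    simp only [Finset.mem_filter, Finset.mem_product, Finset.mem_range, Finset.mem_biUnion,
      Finset.HasAntidiagonal.mem_antidiagonal]
    constructor
    · rintro ⟨⟨h1, h2⟩, h3⟩; exact ⟨k + l, by omega, rfl⟩
    · rintro ⟨m, hm, rfl⟩; omega
  rw [hset, Finset.sum_biUnion]
  · apply Finset.sum_congr rfl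
    intro m _
    rw [Nat.add_choose_eq]
    push_cast
    rw [Finset.mul_sum, Finset.sum_mul]
    apply Finset.sum_congr rfl
    rintro ⟨k, l⟩ hkl
    simp only [Finset.HasAntidiagonal.mem_antidiagonal] at hkl
    simp only [hF, hkl]
    ring
  · intro x _ y _ hxy
    apply Finset.disjoint_left.mpr
    rintro ⟨k, l⟩ hk hl
    simp only [Finset.HasAntidiagonal.mem_antidiagonal] at hk hl
    exact hxy (hk ▸ hl ▸ rfl)

theorem conjugation_by_L_gives_hankel_of_binomial_transform {R : Type*} [CommRing R]
    (a b : ℕ → R)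
    (hb : ∀ n, b n = ∑ k ∈ Finset.range (n + 1),
      (-1 : R) ^ (n - k) * (n.choose k : R) * a k)
    (n : ℕ)
    (L : Matrix (Fin n) (Fin n) R)
    (hL : ∀ i j : Fin n, L i j =
      if (j : ℕ) ≤ i then (-1 : R) ^ ((i : ℕ) - j) * ((i : ℕ).choose j : R) else 0) :
    L * (Matrix.of fun i j : Fin n => a (i + j)) * L.transpose =
      Matrix.of fun i j : Fin n => b (i + j) := by
  ext i j
  simp only [Matrix.mul_apply, Matrix.transpose_apply, Matrix.of_apply]
  have hs : ∀ l : Fin n, (∑ k : Fin n, L i k * a (↑k + ↑l)) * L j l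
      = ∑ k : Fin n, L i k * a (↑k + ↑l) * L j l := fun l => Finset.sum_mul _ _ _
  simp only [hs]
  set g : ℕ → ℕ → R := fun k l =>
    (if k ≤ (i:ℕ) then (-1:R)^((i:ℕ)-k) * ((i:ℕ).choose k : R) else 0) * a (k+l) *
    (if l ≤ (j:ℕ) then (-1:R)^((j:ℕ)-l) * ((j:ℕ).choose l : R) else 0) with hg
  calc ∑ l : Fin n, ∑ k : Fin n, L i k * a (↑k + ↑l) * L j l
      = ∑ k : Fin n, ∑ l : Fin n, L i k * a (↑k + ↑l) * L j l := Finset.sum_comm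
    _ = ∑ k ∈ range n, ∑ l ∈ range n, g k l := by
        rw [← Fin.sum_univ_eq_sum_range (fun k => ∑ l ∈ range n, g k l)]
        apply Finset.sum_congr rfl; intro k _
        rw [← Fin.sum_univ_eq_sum_range (fun l => g ↑k l)]
        apply Finset.sum_congr rfl; intro l _
        rw [hL i k, hL j l]
    _ = ∑ k ∈ range ((i:ℕ)+1), ∑ l ∈ range n, g k l := by
        refine (Finset.sum_subset ?_ ?_).symm
        · intro k hk
          simp only [Finset.mem_range] at hk ⊢
          omega
        · intro k _ hk
          simp only [Finset.mem_range, not_lt] at hk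
          refine Finset.sum_eq_zero fun l _ => ?_
          rw [hg]
          simp only
          rw [if_neg (by omega)]
          ring
    _ = ∑ k ∈ range ((i:ℕ)+1), ∑ l ∈ range ((j:ℕ)+1), g k l := by
        apply Finset.sum_congr rfl; intro k _
        refine (Finset.sum_subset ?_ ?_).symm
        · intro l hl
          simp only [Finset.mem_range] at hl ⊢
          omega
        · intro l _ hl
          simp only [Finset.mem_range, not_lt] at hl
          rw [hg]
          simp only
          rw [if_neg (show ¬ l ≤ (j:ℕ) by omega)]
          ring
    _ = ∑ k ∈ range ((i:ℕ)+1), ∑ l ∈ range ((j:ℕ)+1),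
        ((-1:R)^((i:ℕ)-k) * ((i:ℕ).choose k : R)) * a (k+l) *
          ((-1:R)^((j:ℕ)-l) * ((j:ℕ).choose l : R)) := by
        apply Finset.sum_congr rfl; intro k hk
        apply Finset.sum_congr rfl; intro l hl
        simp only [Finset.mem_range] at hk hl
        rw [hg]
        simp only
        rw [if_pos (by omega), if_pos (by omega)]
    _ = b (↑i + ↑j) := by rw [aux_binomial, hb (↑i + ↑j)]
end

section
/- Let (a_n) be a sequence of integers such that for every n and every prime p, a_{n+p} ≡ a_n (mod p), and let (b_n) be its binomial transform. Then for every n, b_n is divisible by the product of all primes p ≤ n. -/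
open Finset

private lemma neg_one_pow_add_one_dvd (p : ℕ) (hp : p.Prime) :
    (p : ℤ) ∣ (-1 : ℤ) ^ p + 1 := by
  rcases hp.eq_two_or_odd' with rfl | ho
  · norm_num
  · rw [ho.neg_one_pow]; simp

/-- Key lemma: the `p`-th forward difference of `a` is divisible by `p` everywhere. -/
private lemma fwdDiff_p_dvd (a : ℕ → ℤ) (p : ℕ) (hp : p.Prime)
    (ha : ∀ (n : ℕ), (p : ℤ) ∣ a (n + p) - a n) (m : ℕ) :
    (p : ℤ) ∣ (fwdDiff 1)^[p] a m := by
  rw [fwdDiff_iter_eq_sum_shift]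
  obtain ⟨q, rfl⟩ : ∃ q, p = q + 1 := ⟨p - 1, (Nat.succ_pred_eq_of_pos hp.pos).symm⟩
  rw [Finset.sum_range_succ, Finset.sum_range_succ']
  have hmid : ((q + 1 : ℕ) : ℤ) ∣
      ∑ k ∈ Finset.range q, ((-1 : ℤ) ^ (q + 1 - (k + 1)) * ((q + 1).choose (k + 1) : ℤ)) •
        a (m + (k + 1) • 1) := by
    refine Finset.dvd_sum fun k hk => ?_
    have h1 : ((q + 1 : ℕ) : ℤ) ∣ ((q + 1).choose (k + 1) : ℤ) := by
      exact_mod_cast Int.natCast_dvd_natCast.mpr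
        (hp.dvd_choose_self (Nat.succ_ne_zero k) (by have := Finset.mem_range.mp hk; omega))
    rw [smul_eq_mul]
    exact (h1.mul_left _).mul_right _
  have hend : ((q + 1 : ℕ) : ℤ) ∣
      ((-1 : ℤ) ^ (q + 1 - 0) * ((q + 1).choose 0 : ℤ)) • a (m + 0 • 1) +
      ((-1 : ℤ) ^ (q + 1 - (q + 1)) * ((q + 1).choose (q + 1) : ℤ)) • a (m + (q + 1) • 1) := by
    simp only [Nat.sub_zero, Nat.choose_zero_right, Nat.cast_one, mul_one, smul_eq_mul,
      zero_smul, add_zero, Nat.sub_self, pow_zero, Nat.choose_self, one_mul, smul_eq_mul,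
      one_smul]
    have h1 := ha m
    have h2 := (neg_one_pow_add_one_dvd (q + 1) hp).mul_right (a m)
    convert dvd_add h1 h2 using 1
    · rfl
    · ring
  have hs : (∑ k ∈ Finset.range q, ((-1 : ℤ) ^ (q + 1 - (k + 1)) *
        ((q + 1).choose (k + 1) : ℤ)) • a (m + (k + 1) • 1) +
      ((-1 : ℤ) ^ (q + 1 - 0) * ((q + 1).choose 0 : ℤ)) • a (m + 0 • 1)) +
      ((-1 : ℤ) ^ (q + 1 - (q + 1)) * ((q + 1).choose (q + 1) : ℤ)) • a (m + (q + 1) • 1)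
      = (∑ k ∈ Finset.range q, ((-1 : ℤ) ^ (q + 1 - (k + 1)) *
        ((q + 1).choose (k + 1) : ℤ)) • a (m + (k + 1) • 1)) +
      (((-1 : ℤ) ^ (q + 1 - 0) * ((q + 1).choose 0 : ℤ)) • a (m + 0 • 1) +
      ((-1 : ℤ) ^ (q + 1 - (q + 1)) * ((q + 1).choose (q + 1) : ℤ)) • a (m + (q + 1) • 1)) := by
    ring
  rw [hs]
  exact dvd_add hmid hend

private lemma fwdDiff_iter_dvd (p : ℤ) (g : ℕ → ℤ) (hg : ∀ m, p ∣ g m) (j : ℕ) :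
    ∀ m, p ∣ (fwdDiff 1)^[j] g m := by
  induction j generalizing g with
  | zero => simpa using hg
  | succ j ih =>
    intro m
    rw [Function.iterate_succ_apply]
    exact ih _ (fun m => (hg (m + 1)).sub (hg m)) m

theorem primorial_dvd_binomial_transform (a : ℕ → ℤ)
    (ha : ∀ (n : ℕ) (p : ℕ), p.Prime → (p : ℤ) ∣ a (n + p) - a n) :
    ∀ n : ℕ, (∏ p ∈ (Finset.range (n + 1)).filter Nat.Prime, (p : ℤ)) ∣
      ∑ k ∈ Finset.range (n + 1), (-1 : ℤ) ^ (n - k) * (n.choose k : ℤ) * a k := by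
  intro n
  have key : ∑ k ∈ Finset.range (n + 1), (-1 : ℤ) ^ (n - k) * (n.choose k : ℤ) * a k
      = (fwdDiff 1)^[n] a 0 := by
    rw [fwdDiff_iter_eq_sum_shift]
    refine Finset.sum_congr rfl fun k _ => ?_
    simp [smul_eq_mul, mul_assoc]
  rw [key]
  refine Finset.prod_dvd_of_coprime ?_ ?_
  · intro x hx y hy hxy
    simp only [Finset.coe_filter, Set.mem_setOf_eq, Finset.mem_range] at hx hy
    exact Nat.Coprime.isCoprime ((Nat.coprime_primes hx.2 hy.2).mpr hxy)
  · intro p hp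
    simp only [Finset.mem_filter, Finset.mem_range] at hp
    obtain ⟨hpn, hpp⟩ := hp
    have hple : p ≤ n := by omega
    obtain ⟨j, rfl⟩ : ∃ j, n = j + p := ⟨n - p, by omega⟩
    rw [Function.iterate_add_apply]
    exact fwdDiff_iter_dvd _ _ (fwdDiff_p_dvd a p hpp (fun m => ha m p hpp)) j 0
end

section
/- Let (a_n) be a primary pseudo-polynomial (integer sequence with a_{n+p} ≡ a_n mod p for all n and primes p). Then for every positive integer n, the determinant of the n-th Hankel matrix H_n = (a_{i+j})_{0≤i,j≤n-1} is divisible by ∏_{p ≤ n-1, p prime} p^{n-p}. -/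
open Matrix Finset

theorem hankel_det_divisibility (a : ℕ → ℤ)
    (ha : ∀ (n : ℕ) (p : ℕ), p.Prime → (p : ℤ) ∣ a (n + p) - a n) :
    ∀ n : ℕ, 0 < n →
      (∏ p ∈ (Finset.range n).filter Nat.Prime, (p : ℤ) ^ (n - p)) ∣
        Matrix.det (fun i j : Fin n => a (i + j)) := by
  intro n hn
  set M : Matrix (Fin n) (Fin n) ℤ := fun i j => a (i + j) with hMdef
  have key : ∀ p ∈ (Finset.range n).filter Nat.Prime, ((p:ℤ)) ^ (n - p) ∣ M.det := by
    intro p hp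
    simp only [mem_filter, mem_range] at hp
    obtain ⟨hpn, hprime⟩ := hp
    have hp0 : 0 < p := hprime.pos
    set B : Matrix (Fin n) (Fin n) ℤ := fun i j =>
      if p ≤ (i:ℕ) then (a (i + j) - a ((i:ℕ) - p + j)) / p else a (i + j) with hBdef
    set c : Fin n → ℤ := fun i => if p ≤ (i:ℕ) then (p:ℤ) else 1 with hcdef
    set N : Matrix (Fin n) (Fin n) ℤ := fun i k =>
      if p ≤ (i:ℕ) ∧ (k:ℕ) = (i:ℕ) - p then 1 else 0 with hNdef
    have hdvd : ∀ i j : Fin n, p ≤ (i:ℕ) → (p:ℤ) ∣ a ((i:ℕ) + j) - a ((i:ℕ) - p + j) := by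
      intro i j hi
      have h1 : (i:ℕ) + (j:ℕ) = ((i:ℕ) - p + (j:ℕ)) + p := by omega
      rw [h1]
      exact ha _ p hprime
    have hLM : (1 - N) * M = Matrix.diagonal c * B := by
      ext i j
      rw [Matrix.sub_mul, Matrix.one_mul, Matrix.sub_apply, Matrix.mul_apply,
        Matrix.diagonal_mul]
      by_cases hi : p ≤ (i:ℕ)
      · have hi' : (i:ℕ) - p < n := by omega
        have hsum : ∑ k : Fin n, N i k * M k j = M ⟨(i:ℕ) - p, hi'⟩ j := by
          rw [Finset.sum_eq_single (⟨(i:ℕ) - p, hi'⟩ : Fin n)]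
          · simp [hNdef, hi]
          · intro k _ hk
            have : ¬ ((k:ℕ) = (i:ℕ) - p) := fun h => hk (Fin.ext h)
            simp [hNdef, this]
          · simp
        rw [hsum]
        simp only [hMdef, hBdef, hcdef, hi, if_true]
        rw [Int.mul_ediv_cancel' (hdvd i j hi)]
      · have hsum : ∑ k : Fin n, N i k * M k j = 0 := by
          apply Finset.sum_eq_zero
          intro k _
          simp [hNdef, hi]
        rw [hsum]
        simp [hMdef, hBdef, hcdef, hi]
    have hdetL : (1 - N).det = 1 := by
      rw [Matrix.det_of_lowerTriangular]
      · apply Finset.prod_eq_one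
        intro i _
        have hN : N i i = 0 := by
          have : ¬ (p ≤ (i:ℕ) ∧ (i:ℕ) = (i:ℕ) - p) := by rintro ⟨h1, h2⟩; omega
          simp [hNdef, this]
        simp [Matrix.sub_apply, hN]
      · intro i j hij
        have h2 : (i:ℕ) < (j:ℕ) := hij
        have hN : N i j = 0 := by
          have : ¬ (p ≤ (i:ℕ) ∧ (j:ℕ) = (i:ℕ) - p) := by rintro ⟨ha, hb⟩; omega
          simp [hNdef, this]
        have hij' : i ≠ j := Fin.ne_of_lt (Fin.lt_iff_val_lt_val.mpr h2)
        simp [Matrix.sub_apply, Matrix.one_apply, hij', hN]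
    have hdet : M.det = (p:ℤ) ^ (n - p) * B.det := by
      have h1 : M.det = ((1 - N) * M).det := by
        rw [Matrix.det_mul, hdetL, one_mul]
      rw [h1, hLM, Matrix.det_mul, Matrix.det_diagonal]
      congr 1
      rw [Fin.prod_univ_eq_prod_range (fun i => if p ≤ i then (p:ℤ) else 1)]
      rw [Finset.prod_ite, Finset.prod_const, Finset.prod_const_one, mul_one]
      congr 1
      have : (Finset.range n).filter (fun i => p ≤ i) = Finset.Ico p n := by
        ext x; simp [Finset.mem_Ico]; omega
      rw [this, Nat.card_Ico]
    exact ⟨B.det, hdet⟩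
  refine Finset.prod_dvd_of_coprime ?_ key
  intro p hp q hq hne
  simp only [coe_filter, Set.mem_setOf_eq, mem_range] at hp hq
  exact IsCoprime.pow ((Nat.isCoprime_iff_coprime).mpr
    ((Nat.coprime_primes hp.2 hq.2).mpr hne))
end

section
/- Kronecker's rationality criterion (one direction): if f = Σ a_n x^n is the power series expansion of a rational function, then all but finitely many Hankel determinants det(a_{i+j})_{0≤i,j≤n-1} of f vanish. -/
theorem kronecker_forward (a : ℕ → ℂ)
    (h : ∃ (P Q : Polynomial ℂ), Q.coeff 0 ≠ 0 ∧
      PowerSeries.mk a * (Q : PowerSeries ℂ) = (P : PowerSeries ℂ)) :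
    ∀ᶠ n in Filter.atTop, Matrix.det (fun i j : Fin n => a (i + j)) = 0 := by
  obtain ⟨P, Q, hQ0, hPQ⟩ := h
  filter_upwards [Filter.eventually_ge_atTop (max (Q.natDegree + 1) (P.natDegree + 2))]
    with n hn
  have hn1 : 1 ≤ n := le_trans (by omega) hn
  have hQd : Q.natDegree < n := by omega
  have hPd : P.natDegree + 2 ≤ n := le_trans (le_max_right _ _) hn
  apply Matrix.exists_mulVec_eq_zero_iff.mp
  refine ⟨fun j => Q.coeff (n - 1 - j), ?_, ?_⟩
  · intro hv
    apply hQ0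
    have := congrFun hv ⟨n - 1, by omega⟩
    simpa using this
  · funext i
    have key : (∑ j : Fin n, a (i + j) * Q.coeff (n - 1 - j)) =
        ∑ k ∈ Finset.range (↑i + (n - 1) + 1), a (↑i + (n - 1) - k) * Q.coeff k := by
      rw [Fin.sum_univ_eq_sum_range (fun k => a (↑i + k) * Q.coeff (n - 1 - k)) n]
      rw [← Finset.sum_subset (Finset.range_subset_range.2 (by omega : n ≤ ↑i + (n - 1) + 1))
        (fun k _ hk => by
          have : Q.natDegree < k := by simp only [Finset.mem_range, not_lt] at hk; omega
          rw [Polynomial.coeff_eq_zero_of_natDegree_lt this, mul_zero])]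
      rw [← Finset.sum_range_reflect (fun k => a (↑i + (n - 1) - k) * Q.coeff k) n]
      refine Finset.sum_congr rfl fun j hj => ?_
      simp only [Finset.mem_range] at hj
      congr 2 <;> omega
    have hcoeff : (∑ k ∈ Finset.range (↑i + (n - 1) + 1),
        a (↑i + (n - 1) - k) * Q.coeff k) = P.coeff (↑i + (n - 1)) := by
      have hm := congrArg (PowerSeries.coeff (↑i + (n - 1))) hPQ
      rw [PowerSeries.coeff_mul] at hm
      rw [Finset.Nat.sum_antidiagonal_eq_sum_range_succ
        (f := fun x y => PowerSeries.coeff x (PowerSeries.mk a) *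
          PowerSeries.coeff y (Q : PowerSeries ℂ))] at hm
      rw [Polynomial.coeff_coe] at hm
      rw [← hm, ← Finset.sum_range_reflect]
      refine Finset.sum_congr rfl fun j hj => ?_
      simp only [Finset.mem_range] at hj
      rw [PowerSeries.coeff_mk, Polynomial.coeff_coe]
      congr 2 <;> omega
    have hP0 : P.coeff (↑i + (n - 1)) = 0 :=
      Polynomial.coeff_eq_zero_of_natDegree_lt (by omega)
    simp only [Matrix.mulVec, dotProduct, Pi.zero_apply]
    rw [key, hcoeff, hP0]
end

section
/- Kronecker's rationality criterion (converse direction): if (a_n) is a sequence of complex numbers such that det(a_{i+j})_{0≤i,j≤n-1} = 0 for all sufficiently large n, then the formal power series Σ a_n x^n is rational, i.e., its coefficients satisfy a linear recurrence with constant coefficients from some index on. -/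
open Matrix Finset

theorem kronecker_converse (a : ℕ → ℂ)
    (h : ∀ᶠ n in Filter.atTop, Matrix.det (fun i j : Fin n => a (i + j)) = 0) :
    ∃ (N d : ℕ) (c : Fin d → ℂ), ∀ n, N ≤ n →
      a (n + d) = ∑ i : Fin d, c i * a (n + i) := by
  classical
  obtain ⟨m, hm⟩ := Filter.eventually_atTop.mp h
  set P : ℕ → Prop := fun n => Matrix.det (fun i j : Fin n => a (i + j)) ≠ 0 with hPdef
  have hP0 : P 0 := by simp only [hPdef, ne_eq]; exact fun h0 => one_ne_zero ((Matrix.det_isEmpty).symm.trans h0)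
  set r := Nat.findGreatest P m with hrdef
  have hr : Matrix.det (fun i j : Fin r => a (i + j)) ≠ 0 :=
    Nat.findGreatest_spec (Nat.zero_le m) hP0
  have hgt : ∀ n, r < n → Matrix.det (fun i j : Fin n => a (i + j)) = 0 := by
    intro n hn
    by_cases hnm : n ≤ m
    · by_contra hne
      exact Nat.findGreatest_is_greatest hn hnm hne
    · exact hm n (le_of_not_ge hnm)
  set M : Matrix (Fin r) (Fin r) ℂ := fun i j => a (i + j) with hMdef
  have hMdet : IsUnit M.det := isUnit_iff_ne_zero.mpr hr
  set v : Fin r → ℂ := fun j => a (r + j) with hvdef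
  set c : Fin r → ℂ := v ᵥ* M⁻¹ with hcdef
  have hcv : c ᵥ* M = v := by
    rw [hcdef, Matrix.vecMul_vecMul, Matrix.nonsing_inv_mul M hMdet, Matrix.vecMul_one]
  set b : ℕ → ℂ := fun j => a (r + j) - ∑ i : Fin r, c i * a (i + j) with hbdef
  have hbase : ∀ J, b J = 0 := by
    intro J
    induction J using Nat.strong_induction_on with
    | _ J ih =>
    by_cases hJr : J < r
    · have h1 := congrFun hcv ⟨J, hJr⟩
      simp only [Matrix.vecMul, dotProduct, hMdef, hvdef] at h1
      simp only [hbdef]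
      rw [sub_eq_zero]
      simpa using h1.symm
    · push_neg at hJr
      set s := J + 1 - r with hsdef
      have hrs : r + s = J + 1 := by omega
      have hdet : Matrix.det (fun i j : Fin (J + 1) => a (i + j)) = 0 := hgt (J + 1) (by omega)
      set H : Matrix (Fin (J + 1)) (Fin (J + 1)) ℂ := fun i j => a (i + j) with hHdef
      set L : Matrix (Fin (J + 1)) (Fin (J + 1)) ℂ := fun i k =>
        (if (i : ℕ) = k then 1 else 0)
          - ∑ i' : Fin r, (if (k : ℕ) = (i' : ℕ) + ((i : ℕ) - r) ∧ r ≤ (i : ℕ) then c i' else 0)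
        with hLdef
      set G : Matrix (Fin (J + 1)) (Fin (J + 1)) ℂ := fun i j =>
        if (i : ℕ) < r then a (i + j) else b (((i : ℕ) - r) + j) with hGdef
      have hLH : L * H = G := by
        ext i j
        rw [Matrix.mul_apply]
        simp only [hLdef, hHdef, hGdef, sub_mul, Finset.sum_sub_distrib]
        have e1 : ∑ k : Fin (J + 1), (if (i : ℕ) = (k : ℕ) then (1 : ℂ) else 0) * a (k + j)
            = a (i + j) := by
          rw [Finset.sum_eq_single i]
          · simp
          · intro k _ hk
            rw [if_neg (fun hik => hk (Fin.ext hik.symm)), zero_mul]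
          · simp
        have e2 : ∑ k : Fin (J + 1), (∑ i' : Fin r,
              (if (k : ℕ) = (i' : ℕ) + ((i : ℕ) - r) ∧ r ≤ (i : ℕ) then c i' else 0)) * a (k + j)
            = if r ≤ (i : ℕ) then
                ∑ i' : Fin r, c i' * a ((i' : ℕ) + (((i : ℕ) - r) + (j : ℕ))) else 0 := by
          simp_rw [Finset.sum_mul]
          rw [Finset.sum_comm]
          by_cases hri : r ≤ (i : ℕ)
          · rw [if_pos hri]
            refine Finset.sum_congr rfl fun i' _ => ?_
            have hval : (i' : ℕ) + ((i : ℕ) - r) < J + 1 := by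
              have h1 := i'.isLt
              have h2 := i.isLt
              omega
            rw [Finset.sum_eq_single (⟨(i' : ℕ) + ((i : ℕ) - r), hval⟩ : Fin (J + 1))]
            · rw [if_pos ⟨rfl, hri⟩]
              have harg : ((⟨(i' : ℕ) + ((i : ℕ) - r), hval⟩ : Fin (J + 1)) : ℕ) + (j : ℕ)
                  = (i' : ℕ) + (((i : ℕ) - r) + (j : ℕ)) := by
                simp only [Fin.val_mk]
                omega
              rw [harg]
            · intro k _ hk
              rw [if_neg, zero_mul]
              rintro ⟨hk1, -⟩
              exact hk (Fin.ext hk1)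
            · simp
          · rw [if_neg hri]
            refine Finset.sum_eq_zero fun i' _ => ?_
            refine Finset.sum_eq_zero fun k _ => ?_
            rw [if_neg (fun hcc => hri hcc.2), zero_mul]
        rw [e1, e2]
        by_cases hri : r ≤ (i : ℕ)
        · rw [if_pos hri, if_neg (by omega)]
          simp only [hbdef]
          have : r + ((i : ℕ) - r + (j : ℕ)) = (i : ℕ) + (j : ℕ) := by omega
          rw [this]
        · rw [if_neg hri, if_pos (by omega), sub_zero]
      have hdetG : G.det = 0 := by rw [← hLH, Matrix.det_mul, hdet, mul_zero]
      set e : Fin r ⊕ Fin s ≃ Fin (J + 1) := finSumFinEquiv.trans (finCongr hrs) with hedef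
      set D : Matrix (Fin s) (Fin s) ℂ := fun k l => b ((k : ℕ) + (r + (l : ℕ))) with hDdef
      have heL : ∀ i : Fin r, ((e (Sum.inl i) : Fin (J + 1)) : ℕ) = (i : ℕ) := by
        intro i; simp [hedef]
      have heR : ∀ k : Fin s, ((e (Sum.inr k) : Fin (J + 1)) : ℕ) = r + (k : ℕ) := by
        intro k; simp [hedef]
      have hGblocks : G.submatrix e e
          = Matrix.fromBlocks M (fun (i : Fin r) (l : Fin s) => a ((i : ℕ) + (r + (l : ℕ)))) 0 D := by
        ext x y
        cases x with
        | inl i =>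
          cases y with
          | inl j =>
            rw [Matrix.submatrix_apply]; show G (e (Sum.inl i)) (e (Sum.inl j)) = M i j; simp only [hGdef, hMdef]
            rw [heL i, heL j, if_pos i.isLt]
          | inr l =>
            rw [Matrix.submatrix_apply]; show G (e (Sum.inl i)) (e (Sum.inr l)) = a ((i : ℕ) + (r + (l : ℕ))); simp only [hGdef]
            rw [heL i, heR l, if_pos i.isLt]
        | inr k =>
          cases y with
          | inl j =>
            rw [Matrix.submatrix_apply]; show G (e (Sum.inr k)) (e (Sum.inl j)) = 0; simp only [hGdef,
              Matrix.zero_apply]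
            rw [heR k, heL j, if_neg (by omega)]
            refine ih _ ?_
            have h1 := k.isLt
            have h2 := j.isLt
            omega
          | inr l =>
            rw [Matrix.submatrix_apply]; show G (e (Sum.inr k)) (e (Sum.inr l)) = D k l; simp only [hGdef, hDdef]
            rw [heR k, heR l, if_neg (by omega)]
            congr 1
            omega
      have hdetD : D.det = 0 := by
        have h1 := Matrix.det_submatrix_equiv_self e G
        replace h1 := (Matrix.det_fromBlocks_zero₂₁ M _ D).symm.trans ((congrArg Matrix.det hGblocks).symm.trans (h1.trans hdetG))
        exact (mul_eq_zero.mp h1).resolve_left hr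
      have hrev : ∀ y : Fin s, ((Fin.rev y : Fin s) : ℕ) = s - 1 - (y : ℕ) := by
        intro y
        rw [Fin.val_rev]
        omega
      have hDrev : (D.submatrix id ⇑(Fin.revPerm : Equiv.Perm (Fin s))).det = b J ^ s := by
        rw [Matrix.det_of_lowerTriangular]
        · rw [Finset.prod_congr rfl (fun k _ => show _ = b J from ?_), Finset.prod_const,
            Finset.card_univ, Fintype.card_fin]
          rw [Matrix.submatrix_apply, id_eq, Fin.revPerm_apply]; simp only [hDdef]
          congr 1
          have h1 := k.isLt
          have h2 := hrev k
          omega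
        · intro x y hxy
          have hxy' : x < y := hxy
          rw [Matrix.submatrix_apply, id_eq, Fin.revPerm_apply]; simp only [hDdef]
          refine ih _ ?_
          have h1 := hrev y
          have h2 := y.isLt
          have h3 : (x : ℕ) < (y : ℕ) := hxy'
          omega
      have hs0 : s ≠ 0 := by omega
      have hbJ : b J ^ s = 0 := by
        rw [← hDrev, Matrix.det_permute', hdetD, mul_zero]
      exact pow_eq_zero_iff hs0 |>.mp hbJ
  refine ⟨0, r, c, fun n _ => ?_⟩
  have h0 := hbase n
  simp only [hbdef] at h0
  rw [sub_eq_zero] at h0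
  rw [Nat.add_comm n r, h0]
  exact Finset.sum_congr rfl fun i _ => by rw [Nat.add_comm]
end

section
/- If the generating series f = Σ a_n x^n of an integer sequence satisfies: a_{n+k} ≡ a_n (mod k) for all n, k, and f is a rational function whose denominator is a power of (1−x), then (a_n) is a polynomial sequence, i.e., there exists P ∈ ℚ[x] with a_n = P(n) for all n. -/
open Finset

private def dd (a : ℕ → ℤ) : ℕ → ℤ := fun n => a (n + 1) - a n

private lemma dd_zero_fn : dd (fun _ => 0) = fun _ => 0 := by
  funext n; simp [dd]

private lemma coeff_one_sub_X_pow (m : ℕ) : ∀ k : ℕ, m < k →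
    (PowerSeries.coeff (R := ℤ) k) ((1 - PowerSeries.X) ^ m) = 0 := by
  induction m with
  | zero => intro k hk; simp only [pow_zero, PowerSeries.coeff_one, if_neg (by omega : ¬k = 0)]
  | succ m ih =>
    intro k hk
    obtain ⟨k, rfl⟩ : ∃ k', k = k' + 1 := ⟨k - 1, by omega⟩
    have : ((1 - PowerSeries.X) ^ (m + 1) : PowerSeries ℤ) =
        (1 - PowerSeries.X) ^ m - (1 - PowerSeries.X) ^ m * PowerSeries.X := by
      ring
    rw [this, map_sub, PowerSeries.coeff_succ_mul_X,
      ih (k + 1) (by omega), ih k (by omega), sub_zero]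

private lemma coeff_mk_mul_pow (m : ℕ) : ∀ (a : ℕ → ℤ) (n : ℕ),
    (PowerSeries.coeff (R := ℤ) (n + m)) (PowerSeries.mk a * (1 - PowerSeries.X) ^ m) =
      dd^[m] a n := by
  induction m with
  | zero => intro a n; simp
  | succ m ih =>
    intro a n
    have key : PowerSeries.mk a * (1 - PowerSeries.X) =
        PowerSeries.C (a 0) + PowerSeries.X * PowerSeries.mk (dd a) := by
      ext k
      cases k with
      | zero => simp [dd]
      | succ k =>
        rw [mul_sub, mul_one, map_sub, map_add, PowerSeries.coeff_succ_mul_X,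
          PowerSeries.coeff_succ_X_mul, PowerSeries.coeff_mk, PowerSeries.coeff_mk,
          PowerSeries.coeff_mk, PowerSeries.coeff_C, if_neg k.succ_ne_zero]
        simp [dd]
    have expand : PowerSeries.mk a * (1 - PowerSeries.X) ^ (m + 1) =
        PowerSeries.C (a 0) * (1 - PowerSeries.X) ^ m +
          PowerSeries.X * (PowerSeries.mk (dd a) * (1 - PowerSeries.X) ^ m) := by
      calc PowerSeries.mk a * (1 - PowerSeries.X) ^ (m + 1)
          = (PowerSeries.mk a * (1 - PowerSeries.X)) * (1 - PowerSeries.X) ^ m := by ring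
        _ = _ := by rw [key]; ring
    have hnm : n + (m + 1) = (n + m) + 1 := by omega
    rw [expand, map_add, hnm, PowerSeries.coeff_succ_X_mul, ih (dd a) n,
      PowerSeries.coeff_C_mul, coeff_one_sub_X_pow m ((n+m)+1) (by omega), mul_zero, zero_add,
      ← Function.iterate_succ_apply]

private lemma newton : ∀ (n : ℕ) (a : ℕ → ℤ),
    a n = ∑ i ∈ Finset.range (n + 1), (n.choose i : ℤ) * dd^[i] a 0 := by
  intro n
  induction n with
  | zero => intro a; simp
  | succ n ih =>
    intro a
    have ha' : a (n + 1) = (fun j => a (j + 1)) n := rfl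
    have hshift : ∀ i, dd^[i] (fun j => a (j + 1)) 0 = dd^[i] a 0 + dd^[i+1] a 0 := by
      intro i
      have : (fun j => a (j + 1)) = a + dd a := by funext j; simp [dd]
      rw [this]
      have hadd : ∀ (i : ℕ) (f g : ℕ → ℤ), dd^[i] (f + g) = dd^[i] f + dd^[i] g := by
        intro i
        induction i with
        | zero => intro f g; rfl
        | succ i ihi =>
          intro f g
          rw [Function.iterate_succ_apply, Function.iterate_succ_apply,
            Function.iterate_succ_apply]
          have : dd (f + g) = dd f + dd g := by funext j; simp [dd]; ring
          rw [this, ihi]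
      rw [hadd, Pi.add_apply, Function.iterate_succ_apply]
    have hnew := ih (fun j => a (j + 1))
    simp only [hshift] at hnew
    change a (n + 1) = _
    rw [hnew]
    have rhs : ∑ i ∈ Finset.range (n + 2), ((n+1).choose i : ℤ) * dd^[i] a 0
        = (∑ i ∈ Finset.range (n + 1), ((n+1).choose (i+1) : ℤ) * dd^[i+1] a 0) + dd^[0] a 0 := by
      rw [Finset.sum_range_succ' (fun i => ((n+1).choose i : ℤ) * dd^[i] a 0) (n+1)]
      simp
    have lhs2 : (∑ i ∈ Finset.range (n + 1), (n.choose (i+1) : ℤ) * dd^[i+1] a 0) + dd^[0] a 0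
        = ∑ i ∈ Finset.range (n + 1), (n.choose i : ℤ) * dd^[i] a 0 := by
      have h' := Finset.sum_range_succ' (fun i => (n.choose i : ℤ) * dd^[i] a 0) (n+1)
      simp only [Nat.choose_zero_right, Nat.cast_one, one_mul] at h'
      rw [← h', Finset.sum_range_succ,
        Nat.choose_eq_zero_of_lt (by omega : n < n + 1)]
      simp
    rw [show n + 1 + 1 = n + 2 by omega, rhs]
    simp only [Nat.choose_succ_succ n, Nat.cast_add, add_mul, Nat.succ_eq_add_one]
    simp only [mul_add]
    rw [Finset.sum_add_distrib, Finset.sum_add_distrib, add_assoc, lhs2]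
    ring

theorem rational_one_sub_X_denominator_implies_polynomial (a : ℕ → ℤ)
    (ha : ∀ n k : ℕ, (k : ℤ) ∣ a (n + k) - a n)
    (hf : ∃ (Q : Polynomial ℤ) (m : ℕ),
      PowerSeries.mk a * (1 - PowerSeries.X) ^ m = (Q : PowerSeries ℤ)) :
    ∃ P : Polynomial ℚ, ∀ n : ℕ, (a n : ℚ) = P.eval (n : ℚ) := by
  obtain ⟨Q, m, hQ⟩ := hf
  -- eventual vanishing of the m-th difference
  have hzero : ∀ n : ℕ, Q.natDegree < n + m → dd^[m] a n = 0 := by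
    intro n h
    have h1 := coeff_mk_mul_pow m a n
    rw [hQ, Polynomial.coeff_coe, Polynomial.coeff_eq_zero_of_natDegree_lt h] at h1
    exact h1.symm
  -- dd preserves the pseudo-polynomial property
  have hdd : ∀ j : ℕ, ∀ n k : ℕ, (k : ℤ) ∣ dd^[j] a (n + k) - dd^[j] a n := by
    intro j
    induction j with
    | zero => simpa using ha
    | succ j ih =>
      intro n k
      rw [Function.iterate_succ_apply']
      show (k : ℤ) ∣ (dd^[j] a (n + k + 1) - dd^[j] a (n + k)) - (dd^[j] a (n + 1) - dd^[j] a n)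
      have h1 := ih (n + 1) k
      have h2 := ih n k
      rw [show n + 1 + k = n + k + 1 by omega] at h1
      convert dvd_sub h1 h2 using 1
      · rfl
      · ring
  -- the m-th difference vanishes identically
  have hvanish : dd^[m] a = fun _ => 0 := by
    funext n
    by_contra hne
    set b := dd^[m] a n with hb
    set k : ℕ := b.natAbs + Q.natDegree + 1 with hk
    have h0 : dd^[m] a (n + k) = 0 := hzero _ (by omega)
    have hdvd : (k : ℤ) ∣ b := by
      have := hdd m n k
      rw [h0, zero_sub, dvd_neg] at this
      exact this
    have hle : (k : ℤ) ≤ |b| := Int.le_of_dvd (abs_pos.mpr hne) ((dvd_abs _ _).mpr hdvd)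
    rw [Int.abs_eq_natAbs] at hle
    have : (k : ℤ) < (k : ℤ) := lt_of_le_of_lt hle (by exact_mod_cast (by omega : b.natAbs < k))
    exact lt_irrefl _ this
  -- all higher differences vanish identically
  have hvan' : ∀ i : ℕ, m ≤ i → dd^[i] a 0 = 0 := by
    intro i hi
    rw [show i = (i - m) + m by omega, Function.iterate_add_apply, hvanish]
    have : ∀ j : ℕ, dd^[j] (fun _ => (0:ℤ)) = fun _ => 0 := by
      intro j
      induction j with
      | zero => rfl
      | succ j ihj => rw [Function.iterate_succ_apply, dd_zero_fn, ihj]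
    rw [this]
  -- the interpolating polynomial
  refine ⟨∑ i ∈ Finset.range m, Polynomial.C ((dd^[i] a 0 : ℚ) / (i.factorial : ℚ)) *
      descPochhammer ℚ i, fun n => ?_⟩
  have heval : (∑ i ∈ Finset.range m, Polynomial.C ((dd^[i] a 0 : ℚ) / (i.factorial : ℚ)) *
      descPochhammer ℚ i).eval (n : ℚ)
      = ∑ i ∈ Finset.range m, (n.choose i : ℚ) * (dd^[i] a 0 : ℚ) := by
    rw [Polynomial.eval_finset_sum]
    refine Finset.sum_congr rfl fun i _ => ?_
    rw [Polynomial.eval_mul, Polynomial.eval_C, descPochhammer_eval_eq_descFactorial,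
      Nat.descFactorial_eq_factorial_mul_choose]
    push_cast
    field_simp
  rw [heval]
  have hN := newton n a
  have hcast : (a n : ℚ) = ∑ i ∈ Finset.range (n + 1), (n.choose i : ℚ) * (dd^[i] a 0 : ℚ) := by
    rw [hN]; push_cast; ring
  rw [hcast]
  -- both sums equal the sum over range (n + 1 + m)
  have big : ∀ (s : Finset ℕ), s ⊆ Finset.range (n + 1 + m) →
      (∀ i ∈ Finset.range (n + 1 + m), i ∉ s → (n.choose i : ℚ) * (dd^[i] a 0 : ℚ) = 0) →
      ∑ i ∈ s, (n.choose i : ℚ) * (dd^[i] a 0 : ℚ)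
        = ∑ i ∈ Finset.range (n + 1 + m), (n.choose i : ℚ) * (dd^[i] a 0 : ℚ) :=
    fun s hs h0 => Finset.sum_subset hs h0
  rw [big (Finset.range (n+1)) (Finset.range_subset_range.mpr (by omega))
      (fun i _ hi => by
        rw [Nat.choose_eq_zero_of_lt (by simpa using hi : n < i)]
        simp),
    ← big (Finset.range m) (Finset.range_subset_range.mpr (by omega))
      (fun i _ hi => by
        rw [hvan' i (by simpa using hi)]
        simp)]
end
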